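/- The polyhedron Ω(y) = {x ∈ ℝ^n : x ≥ 0, Ax ≤ y} is compact for every y ∈ ℝ^m if and only if there exists u ∈ ℝ^m with u ≥ 0 and Aᵀu ≥ e_n, where e_n = (1,...,1) ∈ ℝ^n. -/

import Mathlib

open Finset

/-- The nonnegative orthant in Euclidean space as a proper cone. -/
noncomputable def orthantCone (ι : Type*) [Fintype ι] : ProperCone ℝ (EuclideanSpace ℝ ι) where
  carrier := {x | ∀ i, 0 ≤ x i}
  add_mem' := fun ha hb i => add_nonneg (ha i) (hb i)
  zero_mem' := fun i => le_refl 0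
  smul_mem' := fun c x hx i => mul_nonneg c.2 (hx i)
  isClosed' := by
    have hc : ∀ i, Continuous fun x : EuclideanSpace ℝ ι => x i := fun i =>
      (continuous_apply i).comp (PiLp.continuousLinearEquiv 2 ℝ _).continuous
    show IsClosed {x : EuclideanSpace ℝ ι | ∀ i, 0 ≤ x i}
    rw [Set.setOf_forall]
    exact isClosed_iInter fun i => isClosed_le continuous_const (hc i)

theorem mem_orthantCone {ι : Type*} [Fintype ι] {x : EuclideanSpace ℝ ι} :
    x ∈ orthantCone ι ↔ ∀ i, 0 ≤ x i := Iff.rfl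

/-- coordinate bound -/
theorem abs_coord_le_norm {ι : Type*} [Fintype ι] [DecidableEq ι] (x : EuclideanSpace ℝ ι) (i : ι) :
    |x i| ≤ ‖x‖ := by
  have h := abs_real_inner_le_norm (EuclideanSpace.single i (1:ℝ)) x
  rw [EuclideanSpace.inner_single_left] at h
  simpa [EuclideanSpace.norm_single] using h

noncomputable def fmap {m n : ℕ} (A : Matrix (Fin m) (Fin n) ℝ) :
    EuclideanSpace ℝ (Fin m ⊕ Fin n) →L[ℝ] EuclideanSpace ℝ (Fin n) :=
  LinearMap.toContinuousLinearMap
  { toFun := fun w => (WithLp.toLp 2 (fun j => (∑ i, A i j * w (Sum.inl i)) - w (Sum.inr j)) :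
      EuclideanSpace ℝ (Fin n))
    map_add' := by
      intro a b; ext j
      simp [mul_add, Finset.sum_add_distrib]
      ring
    map_smul' := by
      intro c a; ext j
      simp only [WithLp.ofLp_toLp, PiLp.smul_apply, smul_eq_mul, RingHom.id_apply, mul_sub,
        Finset.mul_sum, mul_assoc, mul_left_comm] }

theorem fmap_apply {m n : ℕ} (A : Matrix (Fin m) (Fin n) ℝ)
    (w : EuclideanSpace ℝ (Fin m ⊕ Fin n)) (j : Fin n) :
    fmap A w j = (∑ i, A i j * w (Sum.inl i)) - w (Sum.inr j) := rfl

open scoped InnerProductSpace in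
theorem farkas_key {m n : ℕ} (A : Matrix (Fin m) (Fin n) ℝ)
    (hzero : ∀ x : Fin n → ℝ, (∀ j, 0 ≤ x j) → (∀ i, A.mulVec x i ≤ 0) → x = 0) :
    ∃ u : Fin m → ℝ, (∀ i, 0 ≤ u i) ∧ ∀ j, 1 ≤ A.transpose.mulVec u j := by
  set K := orthantCone (Fin m ⊕ Fin n) with hK
  set f := fmap A with hf
  set b : EuclideanSpace ℝ (Fin n) := WithLp.toLp 2 (fun _ => 1) with hbdef
  have hb : b ∈ K.map f := by
    rw [ProperCone.relative_hyperplane_separation]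
    intro y hy
    have key : ∀ k, (0:ℝ) ≤ ⟪f (EuclideanSpace.single k 1), y⟫_ℝ := by
      intro k
      have h1 : EuclideanSpace.single k (1:ℝ) ∈ K := by
        intro i
        rw [EuclideanSpace.single_apply]
        split <;> norm_num
      have h2 := (ProperCone.mem_innerDual).1 hy h1
      rwa [ContinuousLinearMap.adjoint_inner_right] at h2
    have hx0 : ∀ j, 0 ≤ -y j := by
      intro j
      have := key (Sum.inr j)
      simp only [hf, PiLp.inner_apply, RCLike.inner_apply, conj_trivial, fmap_apply,
        EuclideanSpace.single_apply] at this
      simpa using this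
    have hAx : ∀ i, A.mulVec (fun j => -y j) i ≤ 0 := by
      intro i
      have := key (Sum.inl i)
      simp only [hf, PiLp.inner_apply, RCLike.inner_apply, conj_trivial, fmap_apply,
        EuclideanSpace.single_apply] at this
      simp only [Matrix.mulVec, dotProduct]
      simpa [mul_comm] using neg_nonpos_of_nonneg this
    have hy0 := hzero _ hx0 hAx
    have : ∀ j, y j = 0 := by
      intro j
      have := congrFun hy0 j
      simpa [neg_eq_zero] using this
    simp [PiLp.inner_apply, RCLike.inner_apply, this]
  rw [ProperCone.mem_map, PointedCone.mem_closure] at hb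
  rw [Metric.mem_closure_iff] at hb
  obtain ⟨w, hw, hdist⟩ := hb (1/2) (by norm_num)
  rw [SetLike.mem_coe, PointedCone.mem_map] at hw
  obtain ⟨p, hpK, hpw⟩ := hw
  have hwj : ∀ j, 1/2 < w j := by
    intro j
    have h1 : |(b - w) j| ≤ ‖b - w‖ := abs_coord_le_norm _ j
    have h2 : ‖b - w‖ < 1/2 := by rwa [← dist_eq_norm]
    have h3 : (b - w) j = 1 - w j := by simp [hbdef]
    have h4 := (abs_lt.mp (lt_of_le_of_lt h1 h2)).2
    rw [h3] at h4
    linarith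
  have hp : ∀ k, 0 ≤ p k := hpK
  refine ⟨fun i => 2 * p (Sum.inl i), fun i => by have := hp (Sum.inl i); show (0:ℝ) ≤ 2 * p (Sum.inl i); linarith, fun j => ?_⟩
  have hw' : (∑ i, A i j * p (Sum.inl i)) - p (Sum.inr j) = w j := by
    rw [← hpw]; rfl
  have h5 : A.transpose.mulVec (fun i => 2 * p (Sum.inl i)) j
      = 2 * ∑ i, A i j * p (Sum.inl i) := by
    simp only [Matrix.mulVec, dotProduct, Matrix.transpose_apply, Finset.mul_sum]
    exact Finset.sum_congr rfl fun i _ => by ring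
  rw [h5]
  have := hwj j
  have := hp (Sum.inr j)
  linarith

theorem stmt_1 (m n : ℕ) (A : Matrix (Fin m) (Fin n) ℝ) :
    (∀ y : Fin m → ℝ,
        IsCompact {x : Fin n → ℝ | (∀ j, 0 ≤ x j) ∧ ∀ i, A.mulVec x i ≤ y i}) ↔
    ∃ u : Fin m → ℝ, (∀ i, 0 ≤ u i) ∧ ∀ j, 1 ≤ A.transpose.mulVec u j := by
  constructor
  · intro h
    apply farkas_key
    intro x hx0 hAx
    by_contra hne
    obtain ⟨r, hr⟩ := isBounded_iff_forall_norm_le.1 (h 0).isBounded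
    have hx : x ∈ {x : Fin n → ℝ | (∀ j, 0 ≤ x j) ∧ ∀ i, A.mulVec x i ≤ (0 : Fin m → ℝ) i} :=
      ⟨hx0, fun i => by simpa using hAx i⟩
    have hxpos : 0 < ‖x‖ := norm_pos_iff.2 hne
    have hr0 : 0 ≤ r := le_trans (norm_nonneg x) (hr x hx)
    set t := (r + 1) / ‖x‖ with htdef
    have ht : 0 ≤ t := by positivity
    have hmem : t • x ∈ {x : Fin n → ℝ | (∀ j, 0 ≤ x j) ∧ ∀ i, A.mulVec x i ≤ (0 : Fin m → ℝ) i} := by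
      constructor
      · intro j
        simp only [Pi.smul_apply, smul_eq_mul]
        exact mul_nonneg ht (hx0 j)
      · intro i
        rw [Matrix.mulVec_smul]
        simp only [Pi.smul_apply, smul_eq_mul, Pi.zero_apply]
        have := hAx i
        nlinarith
    have hle := hr _ hmem
    rw [norm_smul, Real.norm_eq_abs, abs_of_nonneg ht, htdef,
      div_mul_cancel₀ _ (ne_of_gt hxpos)] at hle
    linarith
  · rintro ⟨u, hu0, hu1⟩ y
    have hclosed : IsClosed {x : Fin n → ℝ | (∀ j, 0 ≤ x j) ∧ ∀ i, A.mulVec x i ≤ y i} := by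
      rw [Set.setOf_and]
      apply IsClosed.inter
      · rw [Set.setOf_forall]
        exact isClosed_iInter fun j => isClosed_le continuous_const (continuous_apply j)
      · rw [Set.setOf_forall]
        refine isClosed_iInter fun i => isClosed_le ?_ continuous_const
        simp only [Matrix.mulVec, dotProduct]
        exact continuous_finset_sum _ fun j _ => continuous_const.mul (continuous_apply j)
    set M := ∑ i, u i * y i with hM
    apply IsCompact.of_isClosed_subset (isCompact_univ_pi fun _ => isCompact_Icc (a := (0:ℝ)) (b := M))
      hclosed
    rintro x ⟨hx0, hxA⟩
    rw [Set.mem_univ_pi]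
    intro j
    refine ⟨hx0 j, ?_⟩
    calc x j ≤ ∑ j', x j' := Finset.single_le_sum (fun j' _ => hx0 j') (Finset.mem_univ j)
      _ ≤ ∑ j', A.transpose.mulVec u j' * x j' :=
          Finset.sum_le_sum fun j' _ => le_mul_of_one_le_left (hx0 j') (hu1 j')
      _ = ∑ i, u i * A.mulVec x i := by
          simp only [Matrix.mulVec, dotProduct, Matrix.transpose_apply, Finset.sum_mul,
            Finset.mul_sum]
          rw [Finset.sum_comm]
          exact Finset.sum_congr rfl fun i _ => Finset.sum_congr rfl fun j' _ => by ring
      _ ≤ M := Finset.sum_le_sum fun i _ => mul_le_mul_of_nonneg_left (hxA i) (hu0 i)
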